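/- arXiv:1609.09306 — 2 statements merged into one kernel-verified Lean document; each statement's English description precedes it below -/
import Mathlib

section
/- Let Ψ : ℝ⁴ → ℝ⁴ be the diffeomorphism Ψ(x,y,z,t) = (x, y + tx, z + t²x, t). For every p = (p₁,p₂,p₃,p₄) ∈ ℝ⁴ and every v ∈ ℝ⁴, writing w = DΨ_p(v), one has w₂ − p₄·w₁ = v₂ + p₁·v₄ and w₃ − p₄²·w₁ = v₃ + 2p₄p₁·v₄; that is, Ψ*(dy − t dx) = dy + x dt and Ψ*(dz − t² dx) = dz + 2tx dt. Consequently DΨ_p(v) ∈ D_lor(Ψ(p)) if and only if v₂ + p₁·v₄ = 0 and v₃ − 2p₄·v₂ = 0, so Ψ pulls the Lorentzian Engel structure back to the plane field ker(dy + x dt) ∩ ker(dz − 2t dy), a Cartan-prolongation-type model. -/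
/-- The Lorentzian Engel structure on `ℝ⁴` with coordinates
`(x, y, z, t) = (p 0, p 1, p 2, p 3)`:
`D_lor(p) = ker(dy − t dx) ∩ ker(dz − t² dx)`. -/
def Dlor (p : Fin 4 → ℝ) : Set (Fin 4 → ℝ) :=
  {v | v 1 = p 3 * v 0 ∧ v 2 = p 3 ^ 2 * v 0}

/-- The diffeomorphism `Ψ(x,y,z,t) = (x, y + tx, z + t²x, t)`. -/
def Psi (q : Fin 4 → ℝ) : Fin 4 → ℝ :=
  ![q 0, q 1 + q 3 * q 0, q 2 + q 3 ^ 2 * q 0, q 3]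

open ContinuousLinearMap in
lemma hasFDerivAt_Psi (p : Fin 4 → ℝ) :
    HasFDerivAt Psi (ContinuousLinearMap.pi
      ![proj 0,
        proj 1 + (p 3 • proj 0 + p 0 • proj 3),
        proj 2 + ((p 3 * p 3) • proj 0 + p 0 • (p 3 • proj 3 + p 3 • proj 3)),
        proj 3] : (Fin 4 → ℝ) →L[ℝ] (Fin 4 → ℝ)) p := by
  have h0 : ∀ i : Fin 4, HasFDerivAt (fun q : Fin 4 → ℝ => q i)
      (proj i : (Fin 4 → ℝ) →L[ℝ] ℝ) p := fun i => hasFDerivAt_apply i p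
  have := hasFDerivAt_pi (𝕜 := ℝ) (φ := fun i (q : Fin 4 → ℝ) => Psi q i)
    (φ' := ![proj 0,
        proj 1 + (p 3 • proj 0 + p 0 • proj 3),
        proj 2 + ((p 3 * p 3) • proj 0 + p 0 • (p 3 • proj 3 + p 3 • proj 3)),
        proj 3]) (x := p)
  refine this.2 fun i => ?_
  fin_cases i <;> simp only [Psi, Matrix.cons_val_zero, Matrix.cons_val_one, Matrix.head_cons,
    Matrix.cons_val_two, Matrix.tail_cons, Matrix.cons_val_three, Fin.isValue]
  · exact h0 0
  · exact (h0 1).add ((h0 3).mul (h0 0))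
  · have := (h0 2).add (((h0 3).mul (h0 3)).mul (h0 0))
    simpa [sq, Pi.add_def, Pi.mul_def] using this
  · exact h0 3

lemma fderiv_Psi (p v : Fin 4 → ℝ):
    fderiv ℝ Psi p v = ![v 0, v 1 + (p 3 * v 0 + p 0 * v 3),
      v 2 + (p 3 ^ 2 * v 0 + p 0 * (2 * p 3 * v 3)), v 3] := by
  rw [(hasFDerivAt_Psi p).fderiv]
  ext i
  fin_cases i <;> simp <;> ring

/-- For `w = DΨ_p(v)` one has `w₂ − p₄ w₁ = v₂ + p₁ v₄` and
`w₃ − p₄² w₁ = v₃ + 2 p₄ p₁ v₄`, i.e. `Ψ*(dy − t dx) = dy + x dt` and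
`Ψ*(dz − t² dx) = dz + 2tx dt`.  Consequently `DΨ_p(v) ∈ D_lor(Ψ(p))` iff
`v₂ + p₁ v₄ = 0` and `v₃ − 2 p₄ v₂ = 0`: `Ψ` pulls `D_lor` back to
`ker(dy + x dt) ∩ ker(dz − 2t dy)`, a Cartan-prolongation-type model. -/
theorem stmt_12 (p v : Fin 4 → ℝ) :
    fderiv ℝ Psi p v 1 - p 3 * fderiv ℝ Psi p v 0 = v 1 + p 0 * v 3 ∧
    fderiv ℝ Psi p v 2 - p 3 ^ 2 * fderiv ℝ Psi p v 0 = v 2 + 2 * p 3 * p 0 * v 3 ∧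
    (fderiv ℝ Psi p v ∈ Dlor (Psi p) ↔ v 1 + p 0 * v 3 = 0 ∧ v 2 - 2 * p 3 * v 1 = 0) := by
  rw [fderiv_Psi p v]
  refine ⟨by simp; ring, by simp; ring, ?_⟩
  simp only [Dlor, Psi, Set.mem_setOf_eq, Matrix.cons_val_zero, Matrix.cons_val_one,
    Matrix.head_cons, Matrix.cons_val_two, Matrix.tail_cons, Matrix.cons_val_three, Fin.isValue]
  constructor
  · rintro ⟨h1, h2⟩
    exact ⟨by linarith, by linear_combination h2 - 2 * p 3 * h1⟩
  · rintro ⟨h1, h2⟩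
    exact ⟨by linarith, by linear_combination h2 + 2 * p 3 * h1⟩
end

section
/- For α ∈ ℝ, define ψ : ℝ³ → ℝ³ by ψ(x,y,z) = (cos α·x + sin α·z, y − sin²α·zx + (1/2)cos α sin α·(z² − x²), cos α·z − sin α·x). Then for every p ∈ ℝ³ and v ∈ ℝ³, writing w = Dψ_p(v), one has w₂ − (ψ(p))₃·w₁ = v₂ − p₃·v₁; that is, ψ*(dy − z dx) = dy − z dx, so ψ is a strict contactomorphism of the standard contact structure ker(dy − z dx) lifting the rotation of the (x,z)-plane by angle −α. -/
open Real

/-- The contactomorphism `ψ : ℝ³ → ℝ³`, the lift of the rotation of the `(x,z)`-plane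
by angle `−α` to the standard contact structure `ker(dy − z dx)`. -/
noncomputable def psi (α : ℝ) (p : Fin 3 → ℝ) : Fin 3 → ℝ :=
  ![cos α * p 0 + sin α * p 2,
    p 1 - sin α ^ 2 * (p 2 * p 0) + (1 / 2) * cos α * sin α * (p 2 ^ 2 - p 0 ^ 2),
    cos α * p 2 - sin α * p 0]

/-- For every `p, v ∈ ℝ³`, writing `w = Dψ_p(v)`, one has
`w₂ − (ψ(p))₃ w₁ = v₂ − p₃ v₁`; that is, `ψ*(dy − z dx) = dy − z dx`, so `ψ` is a
strict contactomorphism of the standard contact structure lifting the rotation of the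
`(x,z)`-plane by angle `−α`. -/
theorem stmt_15 (α : ℝ) (p v : Fin 3 → ℝ) :
    fderiv ℝ (psi α) p v 1 - psi α p 2 * fderiv ℝ (psi α) p v 0
      = v 1 - p 2 * v 0 := by
  have h0 : HasFDerivAt (fun q : Fin 3 → ℝ => q 0)
      (ContinuousLinearMap.proj 0 : (Fin 3 → ℝ) →L[ℝ] ℝ) p :=
    ((ContinuousLinearMap.proj 0 : (Fin 3 → ℝ) →L[ℝ] ℝ)).hasFDerivAt
  have h1 : HasFDerivAt (fun q : Fin 3 → ℝ => q 1)
      (ContinuousLinearMap.proj 1 : (Fin 3 → ℝ) →L[ℝ] ℝ) p :=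
    ((ContinuousLinearMap.proj 1 : (Fin 3 → ℝ) →L[ℝ] ℝ)).hasFDerivAt
  have h2 : HasFDerivAt (fun q : Fin 3 → ℝ => q 2)
      (ContinuousLinearMap.proj 2 : (Fin 3 → ℝ) →L[ℝ] ℝ) p :=
    ((ContinuousLinearMap.proj 2 : (Fin 3 → ℝ) →L[ℝ] ℝ)).hasFDerivAt
  have d0 : HasFDerivAt (fun q : Fin 3 → ℝ => psi α q 0)
      (cos α • (ContinuousLinearMap.proj 0 : (Fin 3 → ℝ) →L[ℝ] ℝ)
        + sin α • ContinuousLinearMap.proj 2) p := by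
    simpa [psi, Pi.add_def] using (h0.const_mul (cos α)).add (h2.const_mul (sin α))
  have d2 : HasFDerivAt (fun q : Fin 3 → ℝ => psi α q 2)
      (cos α • (ContinuousLinearMap.proj 2 : (Fin 3 → ℝ) →L[ℝ] ℝ)
        - sin α • ContinuousLinearMap.proj 0) p := by
    simpa [psi, Pi.sub_def] using (h2.const_mul (cos α)).sub (h0.const_mul (sin α))
  have d1 : HasFDerivAt (fun q : Fin 3 → ℝ => psi α q 1)
      ((ContinuousLinearMap.proj 1 : (Fin 3 → ℝ) →L[ℝ] ℝ)
        - sin α ^ 2 • (p 2 • (ContinuousLinearMap.proj 0 : (Fin 3 → ℝ) →L[ℝ] ℝ)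
          + p 0 • ContinuousLinearMap.proj 2)
        + ((1 : ℝ) / 2 * cos α * sin α) •
          ((p 2 • (ContinuousLinearMap.proj 2 : (Fin 3 → ℝ) →L[ℝ] ℝ)
            + p 2 • ContinuousLinearMap.proj 2)
           - (p 0 • (ContinuousLinearMap.proj 0 : (Fin 3 → ℝ) →L[ℝ] ℝ)
            + p 0 • ContinuousLinearMap.proj 0))) p := by
    have hmul : HasFDerivAt (fun q : Fin 3 → ℝ => q 2 * q 0)
        (p 2 • (ContinuousLinearMap.proj 0 : (Fin 3 → ℝ) →L[ℝ] ℝ)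
          + p 0 • ContinuousLinearMap.proj 2) p := h2.mul h0
    have hsq : HasFDerivAt (fun q : Fin 3 → ℝ => q 2 ^ 2 - q 0 ^ 2)
        ((p 2 • (ContinuousLinearMap.proj 2 : (Fin 3 → ℝ) →L[ℝ] ℝ)
            + p 2 • ContinuousLinearMap.proj 2)
         - (p 0 • (ContinuousLinearMap.proj 0 : (Fin 3 → ℝ) →L[ℝ] ℝ)
            + p 0 • ContinuousLinearMap.proj 0)) p := by
      have := (h2.mul h2).sub (h0.mul h0)
      simpa [sq, Pi.mul_def, Pi.sub_def] using this
    have := (h1.sub (hmul.const_mul (sin α ^ 2))).add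
      (hsq.const_mul ((1 : ℝ) / 2 * cos α * sin α))
    simpa [psi, Pi.add_def, Pi.sub_def] using this
  have hdiff : ∀ i, DifferentiableAt ℝ (fun q : Fin 3 → ℝ => psi α q i) p := by
    intro i
    fin_cases i
    · exact d0.differentiableAt
    · exact d1.differentiableAt
    · exact d2.differentiableAt
  have hpi : fderiv ℝ (psi α) p
      = ContinuousLinearMap.pi fun i => fderiv ℝ (fun q : Fin 3 → ℝ => psi α q i) p :=
    fderiv_pi hdiff
  rw [hpi]
  simp only [ContinuousLinearMap.pi_apply, d0.fderiv, d1.fderiv, d2.fderiv]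
  simp only [ContinuousLinearMap.add_apply, ContinuousLinearMap.sub_apply,
    ContinuousLinearMap.smul_apply, ContinuousLinearMap.proj_apply, smul_eq_mul, psi,
    Matrix.cons_val_two, Matrix.tail_cons, Matrix.head_cons]
  linear_combination (-(p 2 * v 0)) * sin_sq_add_cos_sq α
end
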